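/- Fix L > 0 and c > 4/L^2, and for each N ≥ 2 consider the unique equilibrium configuration on [-L, 0] for constant force F = cN. Then for all sufficiently large N the leftmost particle satisfies -L < x_N^{(N)}, and x_N^{(N)} → -2/√c as N → ∞. -/

import Mathlib

open Finset Filter

/-- An equilibrium (fixed-point) configuration of `N+1` charges
`-L ≤ x N < ... < x 1 < x 0 = 0` on `[-L, 0]` under constant external force `F`:
with gaps `δ k = x (k-1) - x k` and `f k = (δ k)⁻²`, the force balance
`f (k+1) + F = f k` holds for `k = 1, ..., N-1`, and at the left end either
`x N = -L` with `f N ≥ F`, or `x N > -L` with `f N = F`. Such a configuration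
exists and is unique. -/
def IsEquilibConst (N : ℕ) (L F : ℝ) (x : ℕ → ℝ) : Prop :=
  x 0 = 0 ∧ (∀ k < N, x (k + 1) < x k) ∧ -L ≤ x N ∧
  (∀ k, 1 ≤ k → k < N →
    ((x k - x (k + 1)) ^ 2)⁻¹ + F = ((x (k - 1) - x k) ^ 2)⁻¹) ∧
  ((x N = -L ∧ F ≤ ((x (N - 1) - x N) ^ 2)⁻¹) ∨
   (-L < x N ∧ ((x (N - 1) - x N) ^ 2)⁻¹ = F))

private lemma aux_sum_inv_sqrt_le (N : ℕ) :
    ∑ j ∈ Finset.range N, (Real.sqrt (j + 1))⁻¹ ≤ 2 * Real.sqrt N := by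
  induction N with
  | zero => simp
  | succ N ih =>
    rw [Finset.sum_range_succ]
    push_cast
    have ha : (0:ℝ) ≤ Real.sqrt N := Real.sqrt_nonneg _
    have hb : (0:ℝ) < Real.sqrt ((N:ℝ)+1) := Real.sqrt_pos.2 (by positivity)
    have h1 : Real.sqrt N ^ 2 = (N:ℝ) := Real.sq_sqrt (by positivity)
    have h2 : Real.sqrt ((N:ℝ)+1) ^ 2 = (N:ℝ)+1 := Real.sq_sqrt (by positivity)
    have h3 : (Real.sqrt ((N:ℝ)+1))⁻¹ * Real.sqrt ((N:ℝ)+1) = 1 := inv_mul_cancel₀ hb.ne'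
    have key : (Real.sqrt ((N:ℝ)+1))⁻¹ ≤ 2 * (Real.sqrt ((N:ℝ)+1) - Real.sqrt N) := by
      nlinarith [sq_nonneg (Real.sqrt ((N:ℝ)+1) - Real.sqrt N)]
    linarith [ih]

private lemma aux_le_sum_inv_sqrt (N : ℕ) :
    2 * Real.sqrt ((N:ℝ) + 1) - 2 ≤ ∑ j ∈ Finset.range N, (Real.sqrt (j + 1))⁻¹ := by
  induction N with
  | zero => simp
  | succ N ih =>
    rw [Finset.sum_range_succ]
    push_cast
    have ha : (0:ℝ) < Real.sqrt ((N:ℝ)+1) := Real.sqrt_pos.2 (by positivity)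
    have hb : (0:ℝ) < Real.sqrt ((N:ℝ)+2) := Real.sqrt_pos.2 (by positivity)
    have h1 : Real.sqrt ((N:ℝ)+1) ^ 2 = (N:ℝ)+1 := Real.sq_sqrt (by positivity)
    have h2 : Real.sqrt ((N:ℝ)+2) ^ 2 = (N:ℝ)+2 := Real.sq_sqrt (by positivity)
    have h3 : (Real.sqrt ((N:ℝ)+1))⁻¹ * Real.sqrt ((N:ℝ)+1) = 1 := inv_mul_cancel₀ ha.ne'
    have key : 2 * (Real.sqrt ((N:ℝ)+2) - Real.sqrt ((N:ℝ)+1)) ≤ (Real.sqrt ((N:ℝ)+1))⁻¹ := by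
      nlinarith [sq_nonneg (Real.sqrt ((N:ℝ)+2) - Real.sqrt ((N:ℝ)+1))]
    have h4 : (N:ℝ) + 1 + 1 = (N:ℝ) + 2 := by ring
    rw [h4]
    linarith [ih]

private lemma aux_reflect_sum (F : ℝ) (N : ℕ) :
    ∑ k ∈ Finset.range N, (Real.sqrt (((N:ℝ) - k) * F))⁻¹
      = ∑ j ∈ Finset.range N, (Real.sqrt (((j:ℝ) + 1) * F))⁻¹ := by
  rw [← Finset.sum_range_reflect (fun j => (Real.sqrt (((j:ℝ) + 1) * F))⁻¹) N]
  apply Finset.sum_congr rfl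
  intro k hk
  have hk' := Finset.mem_range.mp hk
  have h : ((N - 1 - k : ℕ) : ℝ) + 1 = (N:ℝ) - k := by
    rw [Nat.cast_sub (by omega), Nat.cast_sub (by omega)]
    push_cast; ring
  simp only [h]

private lemma aux_key_formula (L c : ℝ) (hL : 0 < L) (hc : 4 / L ^ 2 < c)
    (N : ℕ) (hN : 2 ≤ N) (x : ℕ → ℝ) (h : IsEquilibConst N L (c * N) x) :
    -L < x N ∧ x N = -((Real.sqrt (c * N))⁻¹ *
      ∑ j ∈ Finset.range N, (Real.sqrt (j + 1))⁻¹) := by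
  have hSle := aux_sum_inv_sqrt_le N
  obtain ⟨hx0, hord, hleft, hrec, hend⟩ := h
  have hc0 : 0 < c := lt_trans (by positivity) hc
  have hNR : (0:ℝ) < N := by
    have : (2:ℝ) ≤ N := by exact_mod_cast hN
    linarith
  set F : ℝ := c * N with hFdef
  have hF : 0 < F := by positivity
  have hg : ∀ m, m ≤ N - 1 → ((x (N - m - 1) - x (N - m)) ^ 2)⁻¹
      = ((x (N - 1) - x N) ^ 2)⁻¹ + m * F := by
    intro m
    induction m with
    | zero => intro _; simp
    | succ m ih =>
      intro hm
      have h1 := ih (by omega)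
      have h2 := hrec (N - m - 1) (by omega) (by omega)
      rw [show N - m - 1 + 1 = N - m from by omega] at h2
      rw [show N - (m+1) = N - m - 1 from by omega]
      push_cast
      linarith
  have hgap : ∀ k, k < N → ((x k - x (k + 1)) ^ 2)⁻¹
      = ((x (N - 1) - x N) ^ 2)⁻¹ + ((N:ℝ) - 1 - k) * F := by
    intro k hk
    have h1 := hg (N - 1 - k) (by omega)
    rw [show N - (N - 1 - k) - 1 = k from by omega,
        show N - (N - 1 - k) = k + 1 from by omega] at h1
    have h2 : ((N - 1 - k : ℕ) : ℝ) = (N:ℝ) - 1 - k := by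
      rw [Nat.cast_sub (by omega), Nat.cast_sub (by omega)]
      push_cast; ring
    rw [h1, h2]
  have hδ : ∀ k, k < N → 0 < x k - x (k + 1) := fun k hk => sub_pos.2 (hord k hk)
  have htel : ∑ k ∈ Finset.range N, (x k - x (k + 1)) = x 0 - x N :=
    Finset.sum_range_sub' x N
  have hNk : ∀ k, k < N → (1:ℝ) ≤ (N:ℝ) - k := by
    intro k hk
    have : (k:ℝ) + 1 ≤ N := by exact_mod_cast hk
    linarith
  have hsc : 0 < Real.sqrt c := Real.sqrt_pos.2 hc0
  have h2L : 2 / Real.sqrt c < L := by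
    have h4 : (4:ℝ) < c * L ^ 2 := (div_lt_iff₀ (by positivity)).mp hc
    have h5 : Real.sqrt 4 < Real.sqrt (c * L ^ 2) :=
      Real.sqrt_lt_sqrt (by norm_num) h4
    rw [show (4:ℝ) = 2 ^ 2 from by norm_num, Real.sqrt_sq (by norm_num),
        Real.sqrt_mul hc0.le, Real.sqrt_sq hL.le] at h5
    rw [div_lt_iff₀ hsc]
    linarith [h5]
  have hsqN : 0 < Real.sqrt N := Real.sqrt_pos.2 hNR
  have hsplit : ∀ j : ℕ, (Real.sqrt (((j:ℝ) + 1) * F))⁻¹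
      = (Real.sqrt F)⁻¹ * (Real.sqrt ((j:ℝ) + 1))⁻¹ := by
    intro j
    rw [Real.sqrt_mul (by positivity), mul_inv]
    ring
  have hsF : Real.sqrt F = Real.sqrt c * Real.sqrt N := Real.sqrt_mul hc0.le _
  rcases hend with ⟨hxN, hge⟩ | ⟨hlt, heqF⟩
  · exfalso
    have hbound : ∀ k, k < N → x k - x (k + 1) ≤ (Real.sqrt (((N:ℝ) - k) * F))⁻¹ := by
      intro k hk
      have h1 := hgap k hk
      have h2 : ((N:ℝ) - k) * F ≤ ((x k - x (k + 1)) ^ 2)⁻¹ := by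
        have := hNk k hk
        nlinarith [hge]
      have hpos : 0 < ((N:ℝ) - k) * F := by
        have := hNk k hk; nlinarith
      have h3 : ((x k - x (k + 1)) ^ 2) ≤ (((N:ℝ) - k) * F)⁻¹ := by
        have := inv_anti₀ hpos h2
        rwa [inv_inv] at this
      calc x k - x (k + 1) = Real.sqrt ((x k - x (k + 1)) ^ 2) :=
            (Real.sqrt_sq (hδ k hk).le).symm
        _ ≤ Real.sqrt ((((N:ℝ) - k) * F)⁻¹) := Real.sqrt_le_sqrt h3
        _ = (Real.sqrt (((N:ℝ) - k) * F))⁻¹ := Real.sqrt_inv _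
    have hsum : (L:ℝ) ≤ ∑ k ∈ Finset.range N, (Real.sqrt (((N:ℝ) - k) * F))⁻¹ := by
      have h0 : x 0 - x N = L := by rw [hx0, hxN]; ring
      rw [← h0, ← htel]
      exact Finset.sum_le_sum fun k hk => hbound k (Finset.mem_range.mp hk)
    rw [aux_reflect_sum] at hsum
    have hsum2 : ∑ j ∈ Finset.range N, (Real.sqrt (((j:ℝ) + 1) * F))⁻¹
        = (Real.sqrt F)⁻¹ * ∑ j ∈ Finset.range N, (Real.sqrt ((j:ℝ) + 1))⁻¹ := by
      rw [Finset.mul_sum]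
      exact Finset.sum_congr rfl fun j _ => hsplit j
    rw [hsum2] at hsum
    have hfin : (Real.sqrt F)⁻¹ * ∑ j ∈ Finset.range N, (Real.sqrt ((j:ℝ) + 1))⁻¹
        ≤ 2 / Real.sqrt c := by
      rw [hsF]
      have h1 : (Real.sqrt c * Real.sqrt N)⁻¹ * ∑ j ∈ Finset.range N, (Real.sqrt ((j:ℝ) + 1))⁻¹
          ≤ (Real.sqrt c * Real.sqrt N)⁻¹ * (2 * Real.sqrt N) := by
        apply mul_le_mul_of_nonneg_left _ (by positivity)
        exact hSle
      calc _ ≤ (Real.sqrt c * Real.sqrt N)⁻¹ * (2 * Real.sqrt N) := h1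
        _ = 2 / Real.sqrt c := by field_simp
    linarith
  · refine ⟨hlt, ?_⟩
    have hgap2 : ∀ k, k < N → x k - x (k + 1) = (Real.sqrt (((N:ℝ) - k) * F))⁻¹ := by
      intro k hk
      have h1 := hgap k hk
      rw [heqF] at h1
      have h2 : ((x k - x (k + 1)) ^ 2)⁻¹ = ((N:ℝ) - k) * F := by
        rw [h1]; ring
      have h3 : (x k - x (k + 1)) ^ 2 = (((N:ℝ) - k) * F)⁻¹ := by
        rw [← h2, inv_inv]
      calc x k - x (k + 1) = Real.sqrt ((x k - x (k + 1)) ^ 2) :=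
            (Real.sqrt_sq (hδ k hk).le).symm
        _ = Real.sqrt ((((N:ℝ) - k) * F)⁻¹) := by rw [h3]
        _ = (Real.sqrt (((N:ℝ) - k) * F))⁻¹ := Real.sqrt_inv _
    have hsum : ∑ k ∈ Finset.range N, (x k - x (k + 1))
        = ∑ k ∈ Finset.range N, (Real.sqrt (((N:ℝ) - k) * F))⁻¹ :=
      Finset.sum_congr rfl fun k hk => hgap2 k (Finset.mem_range.mp hk)
    have hxn : x N = -(∑ k ∈ Finset.range N, (Real.sqrt (((N:ℝ) - k) * F))⁻¹) := by
      rw [← hsum, htel, hx0]; ring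
    rw [hxn, aux_reflect_sum]
    have hsum2 : ∑ j ∈ Finset.range N, (Real.sqrt (((j:ℝ) + 1) * F))⁻¹
        = (Real.sqrt F)⁻¹ * ∑ j ∈ Finset.range N, (Real.sqrt ((j:ℝ) + 1))⁻¹ := by
      rw [Finset.mul_sum]
      exact Finset.sum_congr rfl fun j _ => hsplit j
    rw [hsum2]

/-- For `c > 4/L²` and force `F = c N`, eventually the
leftmost particle of the equilibrium configuration detaches from `-L`, and
`x N N → -2/√c` as `N → ∞`. -/
theorem leftmost_particle_supercritical_linear
    (L c : ℝ) (hL : 0 < L) (hc : 4 / L ^ 2 < c)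
    (x : ℕ → ℕ → ℝ)
    (hx : ∀ N, 2 ≤ N → IsEquilibConst N L (c * (N : ℝ)) (x N)) :
    (∀ᶠ N in Filter.atTop, -L < x N N) ∧
    Filter.Tendsto (fun N => x N N) Filter.atTop (nhds (-2 / Real.sqrt c)) := by
  have key := fun N hN => aux_key_formula L c hL hc N hN (x N) (hx N hN)
  set S : ℕ → ℝ := fun N => ∑ j ∈ Finset.range N, (Real.sqrt (j + 1))⁻¹ with hSdef
  have hc0 : 0 < c := lt_trans (by positivity) hc
  have hsc : 0 < Real.sqrt c := Real.sqrt_pos.2 hc0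
  constructor
  · filter_upwards [eventually_ge_atTop 2] with N hN
    exact (key N hN).1
  · have hratio : Tendsto (fun N : ℕ => S N * (Real.sqrt N)⁻¹) atTop (nhds 2) := by
      have hlim : Tendsto (fun N : ℕ => 2 - 2 * (Real.sqrt N)⁻¹) atTop (nhds 2) := by
        have h1 : Tendsto (fun N : ℕ => Real.sqrt N) atTop atTop := by
          apply tendsto_atTop_atTop.mpr
          intro b
          refine ⟨⌈b^2⌉₊, fun a ha => ?_⟩
          rcases le_or_gt b 0 with hb | hb
          · exact hb.trans (Real.sqrt_nonneg _)
          · have hba : b^2 ≤ (a:ℝ) := le_trans (Nat.le_ceil _) (by exact_mod_cast ha)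
            calc b = Real.sqrt (b^2) := (Real.sqrt_sq hb.le).symm
              _ ≤ Real.sqrt a := Real.sqrt_le_sqrt hba
        have h2 : Tendsto (fun N : ℕ => (Real.sqrt N)⁻¹) atTop (nhds 0) :=
          h1.inv_tendsto_atTop
        have h3 := h2.const_mul (2:ℝ)
        have h4 := (tendsto_const_nhds : Tendsto (fun _ : ℕ => (2:ℝ)) atTop (nhds 2)).sub h3
        simpa using h4
      apply tendsto_of_tendsto_of_tendsto_of_le_of_le' hlim tendsto_const_nhds
      · filter_upwards [eventually_ge_atTop 1] with N hN
        have hNR : (0:ℝ) < N := by exact_mod_cast hN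
        have hsN : 0 < Real.sqrt N := Real.sqrt_pos.2 hNR
        have h5 : 2 * Real.sqrt N - 2 ≤ S N := by
          have h0 := aux_le_sum_inv_sqrt N
          have h6 : Real.sqrt N ≤ Real.sqrt ((N:ℝ) + 1) := Real.sqrt_le_sqrt (by linarith)
          simp only [hSdef]
          linarith
        have h7 : (2 * Real.sqrt N - 2) * (Real.sqrt N)⁻¹ ≤ S N * (Real.sqrt N)⁻¹ :=
          mul_le_mul_of_nonneg_right h5 (by positivity)
        calc 2 - 2 * (Real.sqrt N)⁻¹ = (2 * Real.sqrt N - 2) * (Real.sqrt N)⁻¹ := by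
              field_simp
          _ ≤ S N * (Real.sqrt N)⁻¹ := h7
      · filter_upwards [eventually_ge_atTop 1] with N hN
        have hNR : (0:ℝ) < N := by exact_mod_cast hN
        have hsN : 0 < Real.sqrt N := Real.sqrt_pos.2 hNR
        have h7 : S N * (Real.sqrt N)⁻¹ ≤ (2 * Real.sqrt N) * (Real.sqrt N)⁻¹ :=
          mul_le_mul_of_nonneg_right (aux_sum_inv_sqrt_le N) (by positivity)
        calc S N * (Real.sqrt N)⁻¹ ≤ (2 * Real.sqrt N) * (Real.sqrt N)⁻¹ := h7
          _ = 2 := by field_simp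
    have hmain : Tendsto (fun N : ℕ => -((Real.sqrt c)⁻¹ * (S N * (Real.sqrt N)⁻¹)))
        atTop (nhds (-2 / Real.sqrt c)) := by
      have h1 := (hratio.const_mul ((Real.sqrt c)⁻¹)).neg
      have h2 : -((Real.sqrt c)⁻¹ * 2) = -2 / Real.sqrt c := by ring
      rw [h2] at h1
      exact h1
    apply hmain.congr'
    filter_upwards [eventually_ge_atTop 2] with N hN
    rw [(key N hN).2]
    have hNR : (0:ℝ) < N := by
      have : (2:ℝ) ≤ N := by exact_mod_cast hN
      linarith
    have hsN : 0 < Real.sqrt N := Real.sqrt_pos.2 hNR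
    rw [Real.sqrt_mul hc0.le, mul_inv]
    field_simp
    simp only [hSdef, one_div]
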